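/- Let M, N be positive integers with N ≥ 2, h > 0, τ > 0, and μ, γ, κ, ν ∈ ℝ. Suppose the periodic grid functions u^k, v^k (0 ≤ k ≤ N) satisfy the compact scheme. Define the discrete energy E(u^{k+1},u^k) = (1/2)·(‖u^{k+1}‖² + ‖u^k‖²) + 2ντ·∑_{l=1}^{k}(|u^{l̄}|₁² + (h²/12)·‖v^{l̄}‖² − (h⁴/144)·|v^{l̄}|₁²) + (μ/2)·[(|u^{k+1}|₁² + |u^k|₁²) + (h²/12)·(‖v^{k+1}‖² + ‖v^k‖²) − (h⁴/144)·(|v^{k+1}|₁² + |v^k|₁²)], where w^{l̄} = (w^{l−1} + w^{l+1})/2. Then E(u^{k+1},u^k) = E(u¹,u⁰) for all 1 ≤ k ≤ N−1. (Theorem 4.1, conservative invariant (22).) -/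

import Mathlib

open Finset

namespace BBMB

/-- A periodic grid function with period `M`. -/
def Periodic (M : ℕ) (u : ℤ → ℝ) : Prop := ∀ i : ℤ, u (i + (M : ℤ)) = u i

/-- Forward difference `δ_x u_{i+1/2} = (u_{i+1} - u_i)/h`. -/
noncomputable def dxp (h : ℝ) (u : ℤ → ℝ) (i : ℤ) : ℝ := (u (i + 1) - u i) / h

/-- Backward difference `δ_x u_{i-1/2} = (u_i - u_{i-1})/h`. -/
noncomputable def dxm (h : ℝ) (u : ℤ → ℝ) (i : ℤ) : ℝ := (u i - u (i - 1)) / h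

/-- Second difference `δ_x² u_i = (u_{i+1} - 2 u_i + u_{i-1})/h²`. -/
noncomputable def dxx (h : ℝ) (u : ℤ → ℝ) (i : ℤ) : ℝ :=
  (u (i + 1) - 2 * u i + u (i - 1)) / h ^ 2

/-- Centered difference `Δ_x u_i = (u_{i+1} - u_{i-1})/(2h)`. -/
noncomputable def Dx (h : ℝ) (u : ℤ → ℝ) (i : ℤ) : ℝ := (u (i + 1) - u (i - 1)) / (2 * h)

/-- Discrete inner product `(u, w) = h ∑_{i=1}^{M} u_i w_i`. -/
noncomputable def ip (M : ℕ) (h : ℝ) (u w : ℤ → ℝ) : ℝ :=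
  h * ∑ i ∈ Finset.Icc (1 : ℤ) (M : ℤ), u i * w i

/-- Discrete inner product `⟨δ_x u, δ_x w⟩ = h ∑_{i=1}^{M} (δ_x u_{i-1/2})(δ_x w_{i-1/2})`. -/
noncomputable def dip (M : ℕ) (h : ℝ) (u w : ℤ → ℝ) : ℝ :=
  h * ∑ i ∈ Finset.Icc (1 : ℤ) (M : ℤ), dxm h u i * dxm h w i

/-- Discrete `L²` norm `‖u‖ = √((u,u))`. -/
noncomputable def nrm (M : ℕ) (h : ℝ) (u : ℤ → ℝ) : ℝ := Real.sqrt (ip M h u u)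

/-- Discrete `H¹` seminorm `|u|₁ = √(⟨δ_x u, δ_x u⟩)`. -/
noncomputable def snorm (M : ℕ) (h : ℝ) (u : ℤ → ℝ) : ℝ := Real.sqrt (dip M h u u)

/-- Trilinear term `ψ(u,v)_i = (1/3) (u_i Δ_x v_i + Δ_x (u·v)_i)`. -/
noncomputable def psi (h : ℝ) (u v : ℤ → ℝ) (i : ℤ) : ℝ :=
  (1 / 3) * (u i * Dx h v i + Dx h (fun j => u j * v j) i)

/-- Average of two grid functions. -/
noncomputable def half (w0 w1 : ℤ → ℝ) : ℤ → ℝ := fun i => (w0 i + w1 i) / 2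

/-- The three-level linearized compact difference scheme (17)–(20a). -/
def SatisfiesScheme (M N : ℕ) (h τ μ γ κ ν : ℝ) (u v : ℕ → ℤ → ℝ) : Prop :=
  (∀ k ≤ N, Periodic M (u k) ∧ Periodic M (v k)) ∧
  (∀ k ≤ N, ∀ i : ℤ, v k i = dxx h (u k) i - h ^ 2 / 12 * dxx h (v k) i) ∧
  (∀ i : ℤ,
    (u 1 i - u 0 i) / τ - μ * (v 1 i - v 0 i) / τ
      + γ * (psi h (u 0) (half (u 0) (u 1)) i
             - h ^ 2 / 2 * psi h (v 0) (half (u 0) (u 1)) i)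
      + κ * (Dx h (half (u 0) (u 1)) i - h ^ 2 / 6 * Dx h (half (v 0) (v 1)) i)
      - ν * half (v 0) (v 1) i = 0) ∧
  (∀ k : ℕ, 1 ≤ k → k + 1 ≤ N → ∀ i : ℤ,
    (u (k + 1) i - u (k - 1) i) / (2 * τ) - μ * (v (k + 1) i - v (k - 1) i) / (2 * τ)
      + γ * (psi h (u k) (half (u (k - 1)) (u (k + 1))) i
             - h ^ 2 / 2 * psi h (v k) (half (u (k - 1)) (u (k + 1))) i)
      + κ * (Dx h (half (u (k - 1)) (u (k + 1))) i
             - h ^ 2 / 6 * Dx h (half (v (k - 1)) (v (k + 1))) i)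
      - ν * half (v (k - 1)) (v (k + 1)) i = 0)

/-- The discrete energy `E(u^{k+1}, u^k)`. -/
noncomputable def energyE (M : ℕ) (h τ μ ν : ℝ) (u v : ℕ → ℤ → ℝ) (k : ℕ) : ℝ :=
  1 / 2 * ((nrm M h (u (k + 1))) ^ 2 + (nrm M h (u k)) ^ 2)
    + 2 * ν * τ * ∑ l ∈ Finset.Icc 1 k,
        ((snorm M h (half (u (l - 1)) (u (l + 1)))) ^ 2
          + h ^ 2 / 12 * (nrm M h (half (v (l - 1)) (v (l + 1)))) ^ 2
          - h ^ 4 / 144 * (snorm M h (half (v (l - 1)) (v (l + 1)))) ^ 2)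
    + μ / 2 * (((snorm M h (u (k + 1))) ^ 2 + (snorm M h (u k)) ^ 2)
        + h ^ 2 / 12 * ((nrm M h (v (k + 1))) ^ 2 + (nrm M h (v k)) ^ 2)
        - h ^ 4 / 144 * ((snorm M h (v (k + 1))) ^ 2 + (snorm M h (v k)) ^ 2))

/-- Raw discrete L² pairing (without the `h` factor). -/
noncomputable def SP (M : ℕ) (a b : ℤ → ℝ) : ℝ :=
  ∑ i ∈ Finset.Icc (1 : ℤ) (M : ℤ), a i * b i

/-- Raw discrete H¹ pairing (without any `h` factors). -/
noncomputable def DP (M : ℕ) (a b : ℤ → ℝ) : ℝ :=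
  ∑ i ∈ Finset.Icc (1 : ℤ) (M : ℤ), (a i - a (i - 1)) * (b i - b (i - 1))

/-- The quadratic form `G`. -/
noncomputable def Gr (M : ℕ) (h : ℝ) (a b : ℤ → ℝ) : ℝ :=
  (1 / h ^ 2) * DP M a a + (h ^ 2 / 12) * SP M b b
    - (h ^ 2 / 12) ^ 2 * (1 / h ^ 2) * DP M b b

lemma per_shift1 {M : ℕ} {f : ℤ → ℝ} (hf : Periodic M f) :
    Periodic M (fun i => f (i + 1)) := fun i => by
  show f (i + (M : ℤ) + 1) = f (i + 1)
  rw [show i + (M : ℤ) + 1 = (i + 1) + (M : ℤ) by ring, hf]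

lemma per_shiftm1 {M : ℕ} {f : ℤ → ℝ} (hf : Periodic M f) :
    Periodic M (fun i => f (i - 1)) := fun i => by
  show f (i + (M : ℤ) - 1) = f (i - 1)
  rw [show i + (M : ℤ) - 1 = (i - 1) + (M : ℤ) by ring, hf]

lemma per_mul {M : ℕ} {f g : ℤ → ℝ} (hf : Periodic M f) (hg : Periodic M g) :
    Periodic M (fun i => f i * g i) := fun i => by
  show f (i + (M : ℤ)) * g (i + (M : ℤ)) = f i * g i
  rw [hf, hg]

lemma per_half {M : ℕ} {f g : ℤ → ℝ} (hf : Periodic M f) (hg : Periodic M g) :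
    Periodic M (half f g) := fun i => by
  show (f (i + (M : ℤ)) + g (i + (M : ℤ))) / 2 = (f i + g i) / 2
  rw [hf, hg]

lemma per_Dx {M : ℕ} {h : ℝ} {f : ℤ → ℝ} (hf : Periodic M f) :
    Periodic M (Dx h f) := fun i => by
  show (f (i + (M : ℤ) + 1) - f (i + (M : ℤ) - 1)) / (2 * h) = _
  rw [show i + (M : ℤ) + 1 = (i + 1) + (M : ℤ) by ring,
    show i + (M : ℤ) - 1 = (i - 1) + (M : ℤ) by ring, hf, hf]
  rfl

lemma sum_shift {M : ℕ} (hM : 0 < M) {f : ℤ → ℝ} (hf : Periodic M f) :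
    ∑ i ∈ Finset.Icc (1 : ℤ) (M : ℤ), f (i + 1)
      = ∑ i ∈ Finset.Icc (1 : ℤ) (M : ℤ), f i := by
  have hM1 : (1 : ℤ) ≤ (M : ℤ) := by exact_mod_cast hM
  have h2 : ∑ i ∈ Finset.Icc (2 : ℤ) ((M : ℤ) + 1), f i
      = ∑ i ∈ Finset.Icc (1 : ℤ) (M : ℤ), f (i + 1) := by
    have hmap : Finset.Icc (2 : ℤ) ((M : ℤ) + 1)
        = (Finset.Icc (1 : ℤ) (M : ℤ)).map (addRightEmbedding 1) := by
      rw [Finset.map_add_right_Icc]; norm_num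
    rw [hmap, Finset.sum_map]; rfl
  have h1 : Finset.Icc (1 : ℤ) (M : ℤ) = insert (1 : ℤ) (Finset.Icc 2 (M : ℤ)) := by
    ext i; simp only [Finset.mem_Icc, Finset.mem_insert]; omega
  have h3 : Finset.Icc (2 : ℤ) ((M : ℤ) + 1)
      = insert ((M : ℤ) + 1) (Finset.Icc 2 (M : ℤ)) := by
    ext i; simp only [Finset.mem_Icc, Finset.mem_insert]; omega
  have hn1 : (1 : ℤ) ∉ Finset.Icc 2 (M : ℤ) := by simp
  have hn2 : (M : ℤ) + 1 ∉ Finset.Icc 2 (M : ℤ) := by simp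
  have hfM : f ((M : ℤ) + 1) = f 1 := by
    rw [show (M : ℤ) + 1 = 1 + (M : ℤ) by ring, hf]
  calc ∑ i ∈ Finset.Icc (1 : ℤ) (M : ℤ), f (i + 1)
      = ∑ i ∈ Finset.Icc (2 : ℤ) ((M : ℤ) + 1), f i := h2.symm
    _ = f ((M : ℤ) + 1) + ∑ i ∈ Finset.Icc 2 (M : ℤ), f i := by
        rw [h3, Finset.sum_insert hn2]
    _ = f 1 + ∑ i ∈ Finset.Icc 2 (M : ℤ), f i := by rw [hfM]
    _ = ∑ i ∈ Finset.Icc (1 : ℤ) (M : ℤ), f i := by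
        rw [h1, Finset.sum_insert hn1]

lemma sum_shift' {M : ℕ} (hM : 0 < M) {f : ℤ → ℝ} (hf : Periodic M f) :
    ∑ i ∈ Finset.Icc (1 : ℤ) (M : ℤ), f (i - 1)
      = ∑ i ∈ Finset.Icc (1 : ℤ) (M : ℤ), f i := by
  have := sum_shift hM (f := fun i => f (i - 1)) (per_shiftm1 hf)
  simpa [show ∀ j : ℤ, j + 1 - 1 = j from fun j => by ring] using this.symm

lemma A1 {M : ℕ} (hM : 0 < M) {a b : ℤ → ℝ} (ha : Periodic M a) (hb : Periodic M b) :
    SP M (fun i => a (i + 1)) b = SP M a (fun i => b (i - 1)) := by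
  have := sum_shift' hM (f := fun i => a (i + 1) * b i) (per_mul (per_shift1 ha) hb)
  unfold SP
  simpa [show ∀ j : ℤ, j - 1 + 1 = j from fun j => by ring] using this.symm

lemma A2 {M : ℕ} (hM : 0 < M) {a b : ℤ → ℝ} (ha : Periodic M a) (hb : Periodic M b) :
    SP M (fun i => a (i - 1)) b = SP M a (fun i => b (i + 1)) := by
  have := sum_shift hM (f := fun i => a (i - 1) * b i) (per_mul (per_shiftm1 ha) hb)
  unfold SP
  simpa [show ∀ j : ℤ, j + 1 - 1 = j from fun j => by ring] using this.symm

lemma A3 {M : ℕ} (hM : 0 < M) {a b : ℤ → ℝ} (ha : Periodic M a) (hb : Periodic M b) :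
    SP M (fun i => a (i - 1)) (fun i => b (i - 1)) = SP M a b := by
  have := sum_shift' hM (f := fun i => a i * b i) (per_mul ha hb)
  unfold SP
  exact this

lemma SP_comm (M : ℕ) (a b : ℤ → ℝ) : SP M a b = SP M b a :=
  Finset.sum_congr rfl fun i _ => mul_comm _ _

lemma DP_comm (M : ℕ) (a b : ℤ → ℝ) : DP M a b = DP M b a :=
  Finset.sum_congr rfl fun i _ => mul_comm _ _
lemma dx_skew {M : ℕ} (hM : 0 < M) (h : ℝ) {a b : ℤ → ℝ}
    (ha : Periodic M a) (hb : Periodic M b) :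
    SP M (Dx h a) b = - SP M a (Dx h b) := by
  have e1 := A1 hM ha hb
  have e2 := A2 hM ha hb
  have hL : SP M (Dx h a) b
      = (1 / (2 * h)) * SP M (fun i => a (i + 1)) b
        - (1 / (2 * h)) * SP M (fun i => a (i - 1)) b := by
    unfold SP
    rw [Finset.mul_sum, Finset.mul_sum, ← Finset.sum_sub_distrib]
    exact Finset.sum_congr rfl fun i _ => by simp only [Dx]; ring
  have hR : SP M a (Dx h b)
      = (1 / (2 * h)) * SP M a (fun i => b (i + 1))
        - (1 / (2 * h)) * SP M a (fun i => b (i - 1)) := by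
    unfold SP
    rw [Finset.mul_sum, Finset.mul_sum, ← Finset.sum_sub_distrib]
    exact Finset.sum_congr rfl fun i _ => by simp only [Dx]; ring
  rw [hL, hR, e1, e2]; ring

lemma dxx_DP {M : ℕ} (hM : 0 < M) (h : ℝ) {a b : ℤ → ℝ}
    (ha : Periodic M a) (hb : Periodic M b) :
    SP M (dxx h a) b = -(1 / h ^ 2) * DP M a b := by
  have e1 := A1 hM ha hb
  have e3 := A3 hM ha hb
  have hL : SP M (dxx h a) b
      = (1 / h ^ 2) * SP M (fun i => a (i + 1)) b
        - 2 * (1 / h ^ 2) * SP M a b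
        + (1 / h ^ 2) * SP M (fun i => a (i - 1)) b := by
    unfold SP
    rw [Finset.mul_sum, Finset.mul_sum, Finset.mul_sum, ← Finset.sum_sub_distrib,
      ← Finset.sum_add_distrib]
    exact Finset.sum_congr rfl fun i _ => by simp only [dxx]; ring
  have hR : DP M a b
      = SP M a b - SP M a (fun i => b (i - 1)) - SP M (fun i => a (i - 1)) b
        + SP M (fun i => a (i - 1)) (fun i => b (i - 1)) := by
    unfold SP DP
    rw [← Finset.sum_sub_distrib, ← Finset.sum_sub_distrib, ← Finset.sum_add_distrib]
    exact Finset.sum_congr rfl fun i _ => by ring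
  rw [hL, hR, e1, e3]
  ring

lemma dxx_sym {M : ℕ} (hM : 0 < M) (h : ℝ) {a b : ℤ → ℝ}
    (ha : Periodic M a) (hb : Periodic M b) :
    SP M (dxx h a) b = SP M a (dxx h b) := by
  rw [dxx_DP hM h ha hb, SP_comm M a (dxx h b), dxx_DP hM h hb ha, DP_comm]

lemma psi_zero {M : ℕ} (hM : 0 < M) (h : ℝ) {w y : ℤ → ℝ}
    (hw : Periodic M w) (hy : Periodic M y) :
    SP M (psi h w y) y = 0 := by
  have hwy : Periodic M (fun i => w i * y i) := per_mul hw hy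
  have e1 := dx_skew hM h hwy hy
  have hL : SP M (psi h w y) y
      = (1 / 3) * SP M (fun i => w i * y i) (Dx h y)
        + (1 / 3) * SP M (Dx h (fun j => w j * y j)) y := by
    unfold SP
    rw [Finset.mul_sum, Finset.mul_sum, ← Finset.sum_add_distrib]
    exact Finset.sum_congr rfl fun i _ => by simp only [psi]; ring
  rw [hL, e1]; ring

lemma dx_self_zero {M : ℕ} (hM : 0 < M) (h : ℝ) {a : ℤ → ℝ} (ha : Periodic M a) :
    SP M (Dx h a) a = 0 := by
  have e1 := dx_skew hM h ha ha
  have e2 := SP_comm M a (Dx h a)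
  linarith

lemma rel_self {M : ℕ} (hM : 0 < M) (h : ℝ) {a b : ℤ → ℝ}
    (ha : Periodic M a) (hb : Periodic M b)
    (hrel : ∀ i, b i = dxx h a i - h ^ 2 / 12 * dxx h b i) :
    SP M b a = - Gr M h a b := by
  have hrel' : ∀ i, dxx h a i = b i + h ^ 2 / 12 * dxx h b i := fun i => by
    have := hrel i; linarith
  have E1 : SP M b a = SP M (dxx h a) a - (h ^ 2 / 12) * SP M (dxx h b) a := by
    unfold SP
    rw [Finset.mul_sum, ← Finset.sum_sub_distrib]
    exact Finset.sum_congr rfl fun i _ => by rw [hrel i]; ring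
  have E2 : SP M (dxx h a) a = -(1 / h ^ 2) * DP M a a := dxx_DP hM h ha ha
  have E3 : SP M (dxx h b) a = SP M b (dxx h a) := dxx_sym hM h hb ha
  have E4 : SP M b (dxx h a) = SP M b b + (h ^ 2 / 12) * SP M b (dxx h b) := by
    unfold SP
    rw [Finset.mul_sum, ← Finset.sum_add_distrib]
    exact Finset.sum_congr rfl fun i _ => by rw [hrel' i]; ring
  have E5 : SP M b (dxx h b) = -(1 / h ^ 2) * DP M b b := by
    rw [SP_comm]; exact dxx_DP hM h hb hb
  unfold Gr
  linear_combination E1 + E2 - (h ^ 2 / 12) * E3 - (h ^ 2 / 12) * E4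
    - (h ^ 2 / 12) ^ 2 * E5

lemma rel_sym {M : ℕ} (hM : 0 < M) (h : ℝ) {a b c d : ℤ → ℝ}
    (ha : Periodic M a) (hb : Periodic M b) (hc : Periodic M c) (hd : Periodic M d)
    (hrel1 : ∀ i, b i = dxx h a i - h ^ 2 / 12 * dxx h b i)
    (hrel2 : ∀ i, d i = dxx h c i - h ^ 2 / 12 * dxx h d i) :
    SP M b c = SP M d a := by
  have hrel1' : ∀ i, dxx h a i = b i + h ^ 2 / 12 * dxx h b i := fun i => by
    have := hrel1 i; linarith
  have hrel2' : ∀ i, dxx h c i = d i + h ^ 2 / 12 * dxx h d i := fun i => by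
    have := hrel2 i; linarith
  have E1 : SP M b c = SP M (dxx h a) c - (h ^ 2 / 12) * SP M (dxx h b) c := by
    unfold SP
    rw [Finset.mul_sum, ← Finset.sum_sub_distrib]
    exact Finset.sum_congr rfl fun i _ => by rw [hrel1 i]; ring
  have E2 : SP M (dxx h a) c = SP M a (dxx h c) := dxx_sym hM h ha hc
  have E3 : SP M (dxx h b) c = SP M b (dxx h c) := dxx_sym hM h hb hc
  have E4 : SP M a (dxx h c) = SP M a d + (h ^ 2 / 12) * SP M a (dxx h d) := by
    unfold SP
    rw [Finset.mul_sum, ← Finset.sum_add_distrib]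
    exact Finset.sum_congr rfl fun i _ => by rw [hrel2' i]; ring
  have E5 : SP M b (dxx h c) = SP M b d + (h ^ 2 / 12) * SP M b (dxx h d) := by
    unfold SP
    rw [Finset.mul_sum, ← Finset.sum_add_distrib]
    exact Finset.sum_congr rfl fun i _ => by rw [hrel2' i]; ring
  have E6 : SP M a (dxx h d) = SP M (dxx h a) d := (dxx_sym hM h ha hd).symm
  have E7 : SP M (dxx h a) d = SP M b d + (h ^ 2 / 12) * SP M (dxx h b) d := by
    unfold SP
    rw [Finset.mul_sum, ← Finset.sum_add_distrib]
    exact Finset.sum_congr rfl fun i _ => by rw [hrel1' i]; ring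
  have E8 : SP M (dxx h b) d = SP M b (dxx h d) := dxx_sym hM h hb hd
  have E9 : SP M a d = SP M d a := SP_comm M a d
  linear_combination E1 + E2 - (h ^ 2 / 12) * E3 + E4 + (h ^ 2 / 12) * E6
    + (h ^ 2 / 12) * E7 + (h ^ 2 / 12) ^ 2 * E8 - (h ^ 2 / 12) * E5 + E9
lemma rel_Dx (h : ℝ) {a b : ℤ → ℝ}
    (hrel : ∀ i, b i = dxx h a i - h ^ 2 / 12 * dxx h b i) :
    ∀ i, Dx h b i = dxx h (Dx h a) i - h ^ 2 / 12 * dxx h (Dx h b) i := by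
  intro i
  have r1 := hrel (i + 1)
  have r2 := hrel (i - 1)
  simp only [dxx, Dx] at r1 r2 ⊢
  simp only [show ∀ j : ℤ, j + 1 - 1 = j from fun j => by ring,
    show ∀ j : ℤ, j - 1 + 1 = j from fun j => by ring] at r1 r2 ⊢
  linear_combination (1 / (2 * h)) * r1 - (1 / (2 * h)) * r2

lemma dx_rel_zero {M : ℕ} (hM : 0 < M) (h : ℝ) {a b : ℤ → ℝ}
    (ha : Periodic M a) (hb : Periodic M b)
    (hrel : ∀ i, b i = dxx h a i - h ^ 2 / 12 * dxx h b i) :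
    SP M (Dx h b) a = 0 := by
  have hrelD := rel_Dx h hrel
  have s1 : SP M b (Dx h a) = SP M (Dx h b) a :=
    rel_sym hM h ha hb (per_Dx ha) (per_Dx hb) hrel hrelD
  have s2 : SP M (Dx h b) a = - SP M b (Dx h a) := dx_skew hM h hb ha
  linarith

lemma nrm_sq {M : ℕ} {h : ℝ} (hh : 0 < h) (w : ℤ → ℝ) :
    (nrm M h w) ^ 2 = h * SP M w w := by
  unfold nrm ip
  rw [Real.sq_sqrt (mul_nonneg hh.le (Finset.sum_nonneg fun i _ => mul_self_nonneg _))]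
  rfl

lemma snorm_sq {M : ℕ} {h : ℝ} (hh : 0 < h) (w : ℤ → ℝ) :
    (snorm M h w) ^ 2 = (1 / h) * DP M w w := by
  unfold snorm
  rw [Real.sq_sqrt]
  · unfold dip DP
    rw [Finset.mul_sum, Finset.mul_sum]
    refine Finset.sum_congr rfl fun i _ => ?_
    simp only [dxm]
    field_simp
  · unfold dip
    exact mul_nonneg hh.le (Finset.sum_nonneg fun i _ => mul_self_nonneg _)

lemma SP_half_right (M : ℕ) (a b c : ℤ → ℝ) :
    SP M a (half b c) = (SP M a b + SP M a c) / 2 := by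
  unfold SP
  rw [← Finset.sum_add_distrib, Finset.sum_div]
  exact Finset.sum_congr rfl fun i _ => by simp only [half]; ring

lemma energy_repr (M : ℕ) {h : ℝ} (τ μ ν : ℝ) (hh : 0 < h) (u v : ℕ → ℤ → ℝ) (k : ℕ) :
    energyE M h τ μ ν u v k
      = h / 2 * (SP M (u (k + 1)) (u (k + 1)) + SP M (u k) (u k))
        + 2 * ν * τ * h * (∑ l ∈ Finset.Icc 1 k,
            Gr M h (half (u (l - 1)) (u (l + 1))) (half (v (l - 1)) (v (l + 1))))
        + μ * h / 2 * (Gr M h (u (k + 1)) (v (k + 1)) + Gr M h (u k) (v k)) := by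
  have hsum : ∑ l ∈ Finset.Icc 1 k,
      ((snorm M h (half (u (l - 1)) (u (l + 1)))) ^ 2
        + h ^ 2 / 12 * (nrm M h (half (v (l - 1)) (v (l + 1)))) ^ 2
        - h ^ 4 / 144 * (snorm M h (half (v (l - 1)) (v (l + 1)))) ^ 2)
      = ∑ l ∈ Finset.Icc 1 k,
          h * Gr M h (half (u (l - 1)) (u (l + 1))) (half (v (l - 1)) (v (l + 1))) := by
    refine Finset.sum_congr rfl fun l _ => ?_
    rw [nrm_sq hh, snorm_sq hh, snorm_sq hh]
    unfold Gr
    field_simp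
    ring
  unfold energyE
  rw [hsum, ← Finset.mul_sum]
  rw [nrm_sq hh, nrm_sq hh, nrm_sq hh, nrm_sq hh, snorm_sq hh, snorm_sq hh,
    snorm_sq hh, snorm_sq hh]
  generalize (∑ l ∈ Finset.Icc 1 k, Gr M h (half (u (l - 1)) (u (l + 1))) (half (v (l - 1)) (v (l + 1)))) = S
  unfold Gr
  field_simp
  ring
lemma energy_step (M N : ℕ) (h τ μ γ κ ν : ℝ) (u v : ℕ → ℤ → ℝ)
    (hM : 0 < M) (hh : 0 < h) (hτ : 0 < τ)
    (hscheme : SatisfiesScheme M N h τ μ γ κ ν u v) (j : ℕ) (hj : j + 2 ≤ N) :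
    energyE M h τ μ ν u v (j + 1) = energyE M h τ μ ν u v j := by
  obtain ⟨hper, hrel, -, hiii⟩ := hscheme
  have hpu0 : Periodic M (u j) := (hper j (by omega)).1
  have hpu1 : Periodic M (u (j + 1)) := (hper (j + 1) (by omega)).1
  have hpu2 : Periodic M (u (j + 2)) := (hper (j + 2) (by omega)).1
  have hpv0 : Periodic M (v j) := (hper j (by omega)).2
  have hpv1 : Periodic M (v (j + 1)) := (hper (j + 1) (by omega)).2
  have hpv2 : Periodic M (v (j + 2)) := (hper (j + 2) (by omega)).2
  have hr0 := hrel j (by omega)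
  have hr2 := hrel (j + 2) (by omega)
  have hpub : Periodic M (half (u j) (u (j + 2))) := per_half hpu0 hpu2
  have hpvb : Periodic M (half (v j) (v (j + 2))) := per_half hpv0 hpv2
  have hrelb : ∀ i, half (v j) (v (j + 2)) i
      = dxx h (half (u j) (u (j + 2))) i
        - h ^ 2 / 12 * dxx h (half (v j) (v (j + 2))) i := by
    intro i
    have r1 := hr0 i
    have r2 := hr2 i
    simp only [half, dxx] at r1 r2 ⊢
    linear_combination (1 / 2) * r1 + (1 / 2) * r2
  have hE := hiii (j + 1) (by omega) (by omega)
  simp only [Nat.add_sub_cancel] at hE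
  rw [show j + 1 + 1 = j + 2 from rfl] at hE
  have h0 : (SP M (u (j + 2)) (half (u j) (u (j + 2)))
        - SP M (u j) (half (u j) (u (j + 2))))
      - μ * (SP M (v (j + 2)) (half (u j) (u (j + 2)))
        - SP M (v j) (half (u j) (u (j + 2))))
      + 2 * τ * γ * SP M (psi h (u (j + 1)) (half (u j) (u (j + 2)))) (half (u j) (u (j + 2)))
      - τ * γ * h ^ 2 * SP M (psi h (v (j + 1)) (half (u j) (u (j + 2)))) (half (u j) (u (j + 2)))
      + 2 * τ * κ * SP M (Dx h (half (u j) (u (j + 2)))) (half (u j) (u (j + 2)))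
      - (τ * κ * h ^ 2 / 3) * SP M (Dx h (half (v j) (v (j + 2)))) (half (u j) (u (j + 2)))
      - 2 * τ * ν * SP M (half (v j) (v (j + 2))) (half (u j) (u (j + 2))) = 0 := by
    have hmerge : (SP M (u (j + 2)) (half (u j) (u (j + 2)))
        - SP M (u j) (half (u j) (u (j + 2))))
      - μ * (SP M (v (j + 2)) (half (u j) (u (j + 2)))
        - SP M (v j) (half (u j) (u (j + 2))))
      + 2 * τ * γ * SP M (psi h (u (j + 1)) (half (u j) (u (j + 2)))) (half (u j) (u (j + 2)))
      - τ * γ * h ^ 2 * SP M (psi h (v (j + 1)) (half (u j) (u (j + 2)))) (half (u j) (u (j + 2)))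
      + 2 * τ * κ * SP M (Dx h (half (u j) (u (j + 2)))) (half (u j) (u (j + 2)))
      - (τ * κ * h ^ 2 / 3) * SP M (Dx h (half (v j) (v (j + 2)))) (half (u j) (u (j + 2)))
      - 2 * τ * ν * SP M (half (v j) (v (j + 2))) (half (u j) (u (j + 2)))
        = ∑ i ∈ Finset.Icc (1 : ℤ) (M : ℤ),
            (2 * τ * half (u j) (u (j + 2)) i) *
            ((u (j + 2) i - u j i) / (2 * τ) - μ * (v (j + 2) i - v j i) / (2 * τ)
              + γ * (psi h (u (j + 1)) (half (u j) (u (j + 2))) i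
                  - h ^ 2 / 2 * psi h (v (j + 1)) (half (u j) (u (j + 2))) i)
              + κ * (Dx h (half (u j) (u (j + 2))) i
                  - h ^ 2 / 6 * Dx h (half (v j) (v (j + 2))) i)
              - ν * half (v j) (v (j + 2)) i) := by
      unfold SP
      simp only [Finset.mul_sum, mul_sub, mul_add, ← Finset.sum_sub_distrib,
        ← Finset.sum_add_distrib]
      refine Finset.sum_congr rfl fun i _ => ?_
      field_simp
      ring
    rw [hmerge]
    exact Finset.sum_eq_zero fun i _ => by rw [hE i, mul_zero]
  have c1 : SP M (psi h (u (j + 1)) (half (u j) (u (j + 2)))) (half (u j) (u (j + 2))) = 0 :=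
    psi_zero hM h hpu1 hpub
  have c2 : SP M (psi h (v (j + 1)) (half (u j) (u (j + 2)))) (half (u j) (u (j + 2))) = 0 :=
    psi_zero hM h hpv1 hpub
  have c3 : SP M (Dx h (half (u j) (u (j + 2)))) (half (u j) (u (j + 2))) = 0 :=
    dx_self_zero hM h hpub
  have c4 : SP M (Dx h (half (v j) (v (j + 2)))) (half (u j) (u (j + 2))) = 0 :=
    dx_rel_zero hM h hpub hpvb hrelb
  have c5 : SP M (half (v j) (v (j + 2))) (half (u j) (u (j + 2)))
      = - Gr M h (half (u j) (u (j + 2))) (half (v j) (v (j + 2))) :=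
    rel_self hM h hpub hpvb hrelb
  have c6 := SP_half_right M (u (j + 2)) (u j) (u (j + 2))
  have c7 := SP_half_right M (u j) (u j) (u (j + 2))
  have c9 := SP_half_right M (v (j + 2)) (u j) (u (j + 2))
  have c10 := SP_half_right M (v j) (u j) (u (j + 2))
  have c8 : SP M (u (j + 2)) (u j) = SP M (u j) (u (j + 2)) := SP_comm M _ _
  have c11 : SP M (v (j + 2)) (u (j + 2)) = - Gr M h (u (j + 2)) (v (j + 2)) :=
    rel_self hM h hpu2 hpv2 hr2
  have c12 : SP M (v j) (u j) = - Gr M h (u j) (v j) :=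
    rel_self hM h hpu0 hpv0 hr0
  have c13 : SP M (v (j + 2)) (u j) = SP M (v j) (u (j + 2)) :=
    rel_sym hM h hpu2 hpv2 hpu0 hpv0 hr2 hr0
  rw [c1, c2, c3, c4, c5, c6, c7, c9, c10] at h0
  rw [c8, c11, c12, c13] at h0
  have key : SP M (u (j + 2)) (u (j + 2)) - SP M (u j) (u j)
      + μ * (Gr M h (u (j + 2)) (v (j + 2)) - Gr M h (u j) (v j))
      + 4 * τ * ν * Gr M h (half (u j) (u (j + 2))) (half (v j) (v (j + 2))) = 0 := by
    linear_combination 2 * h0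
  rw [energy_repr M τ μ ν hh u v (j + 1), energy_repr M τ μ ν hh u v j]
  rw [Finset.sum_Icc_succ_top (by omega : 1 ≤ j + 1)]
  simp only [Nat.add_sub_cancel]
  rw [show j + 1 + 1 = j + 2 from rfl]
  linear_combination (h / 2) * key
/-- Theorem 4.1, conservative invariant (22): `E(u^{k+1},u^k) = E(u¹,u⁰)`. -/
theorem energy_conservation (M N : ℕ) (h τ μ γ κ ν : ℝ) (u v : ℕ → ℤ → ℝ)
    (hM : 0 < M) (hN : 2 ≤ N) (hh : 0 < h) (hτ : 0 < τ)
    (hscheme : SatisfiesScheme M N h τ μ γ κ ν u v) :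
    ∀ k : ℕ, 1 ≤ k → k + 1 ≤ N →
      energyE M h τ μ ν u v k = energyE M h τ μ ν u v 0 := by
  intro k
  induction k with
  | zero => intro h1 _; omega
  | succ n ih =>
    intro _ hk2
    have hstep := energy_step M N h τ μ γ κ ν u v hM hh hτ hscheme n (by omega)
    rcases Nat.eq_zero_or_pos n with hn | hn
    · subst hn; simpa using hstep
    · rw [hstep]; exact ih hn (by omega)
end BBMB
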